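/- (Zero-loop criterion.) Let d ≥ 1, let A be a real orthogonal d×d matrix with A² = I and A ≠ I, let Â be the (d+1)×(d+1) block-diagonal matrix diag(A, 1) (so Â is orthogonal with Â² = I), and let ω ∈ ℂ with ω² = 1. Then the following are equivalent: (i) for every p ∈ ℝ^{d+1}, (I − ω·Â^(2)) · w(p, Âp) = 0, where I is the identity matrix indexed by pairs (i,j) with 1 ≤ i < j ≤ d+1; (ii) ω = −1. -/
import Mathlib


open Matrix

/-- The second compound matrix of an `n × n` matrix `A`: rows and columns are indexed by
the pairs `(i, j)` with `i < j`, and the entry at `((i,j),(k,l))` is the determinant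
`A i k * A j l - A i l * A j k` of the corresponding `2 × 2` submatrix of `A`. -/
def compound2 {R : Type*} [CommRing R] {n : ℕ} (A : Matrix (Fin n) (Fin n) R) :
    Matrix {p : Fin n × Fin n // p.1 < p.2} {p : Fin n × Fin n // p.1 < p.2} R :=
  Matrix.of fun P Q =>
    A P.1.1 Q.1.1 * A P.1.2 Q.1.2 - A P.1.1 Q.1.2 * A P.1.2 Q.1.1

/-- The Plücker coordinates of the 2-extensor `x ∧ y`: the vector indexed by pairs
`(i, j)` with `i < j` whose `(i,j)`-entry is `x i * y j - x j * y i`. -/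
def plucker {R : Type*} [CommRing R] {n : ℕ} (x y : Fin n → R) :
    {p : Fin n × Fin n // p.1 < p.2} → R :=
  fun P => x P.1.1 * y P.1.2 - x P.1.2 * y P.1.1

lemma compound2_mulVec_plucker {R : Type*} [CommRing R] {n : ℕ}
    (A : Matrix (Fin n) (Fin n) R) (x y : Fin n → R) :
    compound2 A *ᵥ plucker x y = plucker (A *ᵥ x) (A *ᵥ y) := by
  funext P
  obtain ⟨⟨i, j⟩, hij⟩ := P
  simp only [mulVec, dotProduct, compound2, plucker, of_apply]
  set G : Fin n × Fin n → R := fun p =>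
    A i p.1 * x p.1 * (A j p.2 * y p.2) - A j p.1 * x p.1 * (A i p.2 * y p.2) with hG
  have hRHS : (∑ k, A i k * x k) * (∑ l, A j l * y l)
      - (∑ k, A j k * x k) * (∑ l, A i l * y l) = ∑ p : Fin n × Fin n, G p := by
    rw [Fintype.sum_prod_type]
    simp only [hG, Finset.sum_sub_distrib]
    rw [← Finset.sum_mul_sum, ← Finset.sum_mul_sum]
  rw [hRHS]
  rw [← Finset.sum_filter_add_sum_filter_not Finset.univ (fun p : Fin n × Fin n => p.1 < p.2) G]
  have h1 : ∑ p ∈ Finset.univ.filter (fun p : Fin n × Fin n => ¬ p.1 < p.2), G p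
      = ∑ p ∈ Finset.univ.filter (fun p : Fin n × Fin n => p.2 < p.1), G p := by
    symm
    apply Finset.sum_subset
    · intro p hp
      simp only [Finset.mem_filter, Finset.mem_univ, true_and] at hp ⊢
      omega
    · rintro ⟨a, b⟩ hp hp'
      simp only [Finset.mem_filter, Finset.mem_univ, true_and] at hp hp'
      have : a = b := le_antisymm (not_lt.mp hp') (not_lt.mp hp)
      subst this
      simp [hG]; ring
  have h2 : ∑ p ∈ Finset.univ.filter (fun p : Fin n × Fin n => p.2 < p.1), G p
      = ∑ p ∈ Finset.univ.filter (fun p : Fin n × Fin n => p.1 < p.2), G p.swap := by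
    apply Finset.sum_equiv (Equiv.prodComm (Fin n) (Fin n))
    · intro p; simp
    · intro p hp; simp [hG]
  rw [h1, h2, ← Finset.sum_add_distrib]
  rw [Finset.sum_subtype (p := fun p : Fin n × Fin n => p.1 < p.2) (Finset.univ.filter (fun p : Fin n × Fin n => p.1 < p.2))
    (by simp) (fun p : Fin n × Fin n => G p + G p.swap)]
  apply Finset.sum_congr rfl
  rintro ⟨⟨a, b⟩, _⟩ _
  simp [hG]
  ring

lemma plucker_swap {R : Type*} [CommRing R] {n : ℕ} (x y : Fin n → R) :
    plucker y x = - plucker x y := by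
  funext P; simp [plucker]; ring

/-- Zero-loop criterion: for an orthogonal real involution `A ≠ 1`, with
`Â = diag(A, 1)` and `ω² = 1`, the vector `(I - ω Â⁽²⁾) ⬝ w(p, Âp)` vanishes for all
`p` if and only if `ω = -1`. -/
theorem zero_loop_criterion (d : ℕ) (hd : 1 ≤ d)
    (A : Matrix (Fin d) (Fin d) ℝ) (hA : Aᵀ * A = 1) (hA2 : A * A = 1) (hAne : A ≠ 1)
    (Ahat : Matrix (Fin (d + 1)) (Fin (d + 1)) ℝ)
    (hAhat : Ahat = Matrix.reindex finSumFinEquiv finSumFinEquiv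
      (Matrix.fromBlocks A 0 0 (1 : Matrix (Fin 1) (Fin 1) ℝ)))
    (ω : ℂ) (hω : ω ^ 2 = 1) :
    (∀ p : Fin (d + 1) → ℝ,
        (1 - ω • compound2 (Ahat.map Complex.ofReal)) *ᵥ
          (fun q => ((plucker p (Ahat *ᵥ p)) q : ℂ)) = 0) ↔ ω = -1 := by
  set B := Ahat.map Complex.ofReal with hB
  have hAhat2 : Ahat * Ahat = 1 := by
    rw [hAhat]
    simp only [Matrix.reindex_apply, Matrix.submatrix_mul_equiv]
    rw [Matrix.fromBlocks_multiply]
    simp [hA2, Matrix.fromBlocks_one]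
  have hB2 : B * B = 1 := by
    rw [hB, show (Complex.ofReal : ℝ → ℂ) = (Complex.ofRealHom : ℝ →+* ℂ) from rfl,
      ← Matrix.map_mul, hAhat2]
    simp
  have hcast : ∀ p : Fin (d + 1) → ℝ,
      (fun q => ((plucker p (Ahat *ᵥ p)) q : ℂ))
        = plucker (fun i => (p i : ℂ)) (B *ᵥ fun i => (p i : ℂ)) := by
    intro p
    funext q
    simp [plucker, mulVec, dotProduct, hB, Matrix.map_apply]
  have core : ∀ p : Fin (d + 1) → ℝ,
      (1 - ω • compound2 B) *ᵥ plucker (fun i => (p i : ℂ)) (B *ᵥ fun i => (p i : ℂ))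
        = (1 + ω) • plucker (fun i => (p i : ℂ)) (B *ᵥ fun i => (p i : ℂ)) := by
    intro p
    set pc : Fin (d + 1) → ℂ := fun i => (p i : ℂ)
    have hC : compound2 B *ᵥ plucker pc (B *ᵥ pc) = - plucker pc (B *ᵥ pc) := by
      rw [compound2_mulVec_plucker, Matrix.mulVec_mulVec, hB2, Matrix.one_mulVec,
        plucker_swap]
    rw [Matrix.sub_mulVec, Matrix.one_mulVec, Matrix.smul_mulVec, hC]
    module
  constructor
  · intro h
    have hω' : ω = 1 ∨ ω = -1 := by
      have : (ω - 1) * (ω + 1) = 0 := by linear_combination hω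
      rcases mul_eq_zero.mp this with h' | h'
      · left; exact sub_eq_zero.mp h'
      · right; exact eq_neg_of_add_eq_zero_left h'
    rcases hω' with rfl | h'
    · exfalso
      -- find eigenvector
      have hAx : ∃ j, A *ᵥ Pi.single j 1 ≠ Pi.single j 1 := by
        by_contra hc
        push_neg at hc
        apply hAne
        ext i j
        have := congrFun (hc j) i
        simpa [mulVec, dotProduct, Pi.single_apply, Matrix.one_apply] using this
      obtain ⟨j0, hj0⟩ := hAx
      set x : Fin d → ℝ := Pi.single j0 1
      set u : Fin d → ℝ := x - A *ᵥ x with hu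
      have hune : u ≠ 0 := sub_ne_zero.mpr (Ne.symm hj0)
      have hAu : A *ᵥ u = -u := by
        rw [hu, Matrix.mulVec_sub, Matrix.mulVec_mulVec, hA2, Matrix.one_mulVec]
        abel
      obtain ⟨k0, hk0⟩ : ∃ k, u k ≠ 0 := Function.ne_iff.mp hune
      set e := finSumFinEquiv (m := d) (n := 1)
      set p : Fin (d + 1) → ℝ := Sum.elim u (fun _ => (1 : ℝ)) ∘ e.symm with hp
      have hAp : Ahat *ᵥ p = Sum.elim (-u) (fun _ => (1 : ℝ)) ∘ e.symm := by
        rw [hAhat]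
        simp only [Matrix.reindex_apply]
        rw [Matrix.submatrix_mulVec_equiv]
        have hpe : p ∘ e.symm.symm = Sum.elim u (fun _ => (1 : ℝ)) := by
          funext s; simp [hp]
        rw [hpe, Matrix.fromBlocks_mulVec]
        simp [hAu]
      have hlt : e (Sum.inl k0) < e (Sum.inr 0) := by
        simp only [e, finSumFinEquiv_apply_left, finSumFinEquiv_apply_right]
        simp [Fin.lt_def]
      have h0 := h p
      rw [hcast p, core p] at h0
      have h1 := congrFun h0 ⟨(e (Sum.inl k0), e (Sum.inr 0)), hlt⟩
      simp only [Pi.smul_apply, Pi.zero_apply, smul_eq_mul] at h1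
      have h2 : plucker (fun i => ((p i : ℝ) : ℂ)) (B *ᵥ fun i => ((p i : ℝ) : ℂ))
          ⟨(e (Sum.inl k0), e (Sum.inr 0)), hlt⟩ = 0 := by
        rcases mul_eq_zero.mp h1 with h' | h'
        · norm_num at h'
        · exact h'
      rw [← hcast p] at h2
      have h3 : plucker p (Ahat *ᵥ p) ⟨(e (Sum.inl k0), e (Sum.inr 0)), hlt⟩ = 0 := by
        simpa using h2
      rw [hAp] at h3
      have hval : plucker p (Sum.elim (-u) (fun _ => (1:ℝ)) ∘ e.symm)
          ⟨(e (Sum.inl k0), e (Sum.inr 0)), hlt⟩ = 2 * u k0 := by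
        simp [plucker, hp]
        ring
      rw [hval] at h3
      apply hk0
      linarith
    · exact h'
  · intro hω'
    subst hω'
    intro p
    rw [hcast p, core p]
    simp
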